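/- Let A be a commutative ring, f ∈ A, and Â = lim_n A/(f^n). If M is an A-module with A_f ⊗_A M = 0 (i.e. the localization M_f vanishes), then the natural map M → Â ⊗_A M is an isomorphism. Consequently, if additionally Â ⊗_A M = 0, then M = 0. -/

import Mathlib

open TensorProduct

section Aux

variable {A : Type} [CommRing A] (f : A) {M : Type} [AddCommGroup M] [Module A M]

private lemma mem_pow_smul_top {k : ℕ} {x : A}
    (hx : x ∈ (Ideal.span {f} ^ k • ⊤ : Submodule A A)) : ∃ c, x = f ^ k * c := by
  have h1 : (Ideal.span {f} ^ k • ⊤ : Submodule A A) = Ideal.span {f} ^ k := by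
    rw [smul_eq_mul, Ideal.mul_top]
  rw [h1, Ideal.span_singleton_pow, Ideal.mem_span_singleton] at hx
  exact hx

private lemma pow_smul_top_mem (k : ℕ) (d : A) :
    f ^ k * d ∈ (Ideal.span {f} ^ k • ⊤ : Submodule A A) :=
  Submodule.smul_mem_smul (Ideal.pow_mem_pow (Ideal.mem_span_singleton_self f) k)
    Submodule.mem_top

private lemma kill_mono {k N : ℕ} {m : M} (h : f ^ k • m = 0) (hkN : k ≤ N) :
    f ^ N • m = 0 := by
  rw [← Nat.sub_add_cancel hkN, pow_add, mul_smul, h, smul_zero]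

private lemma aux_key (a : AdicCompletion (Ideal.span {f}) A) (n : ℕ) (m : M)
    (hm : f ^ n • m = 0) (ha : a.val n = 0) :
    a ⊗ₜ[A] m = (0 : AdicCompletion (Ideal.span {f}) A ⊗[A] M) := by
  obtain ⟨c, rfl⟩ := AdicCompletion.mk_surjective (Ideal.span {f}) A a
  have hcn : (c : ℕ → A) n ∈ (Ideal.span {f} ^ n • ⊤ : Submodule A A) := by
    have h0 : (AdicCompletion.mk _ A c).val n = 0 := ha
    rw [AdicCompletion.mk_apply_coe, Submodule.mkQ_apply, Submodule.Quotient.mk_eq_zero] at h0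
    exact h0
  obtain ⟨g, hg⟩ := mem_pow_smul_top f hcn
  have hd : ∀ j, ∃ d, (c : ℕ → A) (n + j + 1) - c (n + j) = f ^ (n + j) * d := by
    intro j
    apply mem_pow_smul_top f
    have h1 := (c.property (Nat.le_succ (n + j))).symm
    rw [SModEq.sub_mem] at h1
    exact h1
  choose d hdspec using hd
  set z : ℕ → A := fun k => g + ∑ j ∈ Finset.range k, f ^ j * d j with hz
  have hz1 : ∀ k, f ^ n * z k = (c : ℕ → A) (n + k) := by
    intro k
    induction k with
    | zero => simpa [hz] using hg.symm
    | succ k ih =>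
      have : z (k + 1) = z k + f ^ k * d k := by
        simp [hz, Finset.sum_range_succ, add_assoc]
      rw [this, mul_add, ih, ← mul_assoc, ← pow_add, ← hdspec k,
        show n + (k + 1) = n + k + 1 from rfl]
      ring
  have hz2 : ∀ k, z k ≡ z (k + 1) [SMOD (Ideal.span {f} ^ k • ⊤ : Submodule A A)] := by
    intro k
    rw [SModEq.sub_mem]
    have : z k - z (k + 1) = -(f ^ k * d k) := by
      simp [hz, Finset.sum_range_succ]
    rw [this]
    exact neg_mem (pow_smul_top_mem f k (d k))
  set Z := AdicCompletion.AdicCauchySequence.mk (Ideal.span {f}) A z hz2 with hZ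
  have heq : AdicCompletion.mk _ A c =
      f ^ n • AdicCompletion.mk (Ideal.span {f}) A Z := by
    rw [← map_smul]
    ext k
    rw [AdicCompletion.mk_apply_coe, AdicCompletion.mk_apply_coe]
    have hv : ((f ^ n • Z : AdicCompletion.AdicCauchySequence (Ideal.span {f}) A) : ℕ → A) k
        = f ^ n * z k := by
      simp [hZ, smul_eq_mul]
    rw [Submodule.mkQ_apply, Submodule.mkQ_apply, hv, hz1 k]
    exact (AdicCompletion.AdicCauchySequence.mk_eq_mk (Nat.le_add_left k n) c).symm
  rw [heq, smul_tmul, hm, tmul_zero]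

/-- Action of the adic completion on an `f`-power-torsion module. -/
private noncomputable def act (tor : ∀ m : M, ∃ n, f ^ n • m = 0)
    (a : AdicCompletion (Ideal.span {f}) A) (m : M) : M :=
  (Submodule.Quotient.mk_surjective _ (a.val (tor m).choose)).choose • m

private lemma act_eq (tor : ∀ m : M, ∃ n, f ^ n • m = 0)
    (a : AdicCompletion (Ideal.span {f}) A) {n : ℕ} {b : A} {m : M}
    (hm : f ^ n • m = 0)
    (hb : (Submodule.Quotient.mk b : A ⧸ (Ideal.span {f} ^ n • ⊤ : Submodule A A)) = a.val n) :
    act f tor a m = b • m := by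
  set k := (tor m).choose with hkdef
  have hkm : f ^ k • m = 0 := (tor m).choose_spec
  have hc : (Submodule.Quotient.mk ((Submodule.Quotient.mk_surjective
      (Ideal.span {f} ^ k • ⊤ : Submodule A A) (a.val k)).choose) :
      A ⧸ (Ideal.span {f} ^ k • ⊤ : Submodule A A)) = a.val k :=
    (Submodule.Quotient.mk_surjective _ (a.val k)).choose_spec
  set c := (Submodule.Quotient.mk_surjective
      (Ideal.span {f} ^ k • ⊤ : Submodule A A) (a.val k)).choose
  have h1 : (Submodule.Quotient.mk b :
      A ⧸ (Ideal.span {f} ^ (min n k) • ⊤ : Submodule A A)) = a.val (min n k) := by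
    have ht := AdicCompletion.transitionMap_comp_eval_apply (Ideal.span {f}) A
      (min_le_left n k) a
    rw [← ht, ← hb]; rfl
  have h2 : (Submodule.Quotient.mk c :
      A ⧸ (Ideal.span {f} ^ (min n k) • ⊤ : Submodule A A)) = a.val (min n k) := by
    have ht := AdicCompletion.transitionMap_comp_eval_apply (Ideal.span {f}) A
      (min_le_right n k) a
    rw [← ht, ← hc]; rfl
  have hbc : b - c ∈ (Ideal.span {f} ^ (min n k) • ⊤ : Submodule A A) := by
    rw [← Submodule.Quotient.eq]
    exact h1.trans h2.symm
  obtain ⟨e, he⟩ := mem_pow_smul_top f hbc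
  have hlm : f ^ (min n k) • m = 0 := by
    rcases le_total n k with h' | h'
    · rw [min_eq_left h']; exact hm
    · rw [min_eq_right h']; exact hkm
  have hzero : (b - c) • m = 0 := by
    rw [he, mul_comm, mul_smul, hlm, smul_zero]
  have hbm : b • m - c • m = 0 := by rw [← sub_smul, hzero]
  show c • m = b • m
  exact (sub_eq_zero.mp hbm).symm

/-- The action as a bilinear map. -/
private noncomputable def actHom (tor : ∀ m : M, ∃ n, f ^ n • m = 0) :
    AdicCompletion (Ideal.span {f}) A →ₗ[A] M →ₗ[A] M where
  toFun a :=
    { toFun := act f tor a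
      map_add' := by
        intro m m'
        show act f tor a (m + m') = act f tor a m + act f tor a m'
        obtain ⟨n₁, h₁⟩ := tor m
        obtain ⟨n₂, h₂⟩ := tor m'
        obtain ⟨n₃, h₃⟩ := tor (m + m')
        set N := max n₁ (max n₂ n₃) with hN
        obtain ⟨b, hb⟩ := Submodule.Quotient.mk_surjective
          (Ideal.span {f} ^ N • ⊤ : Submodule A A) (a.val N)
        rw [act_eq f tor a (kill_mono f h₃ (le_max_of_le_right (le_max_right _ _))) hb,
          act_eq f tor a (kill_mono f h₁ (le_max_left _ _)) hb,
          act_eq f tor a (kill_mono f h₂ (le_max_of_le_right (le_max_left _ _))) hb,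
          smul_add]
      map_smul' := by
        intro r m
        show act f tor a (r • m) = (RingHom.id A) r • act f tor a m
        rw [RingHom.id_apply]
        obtain ⟨n₁, h₁⟩ := tor m
        obtain ⟨n₂, h₂⟩ := tor (r • m)
        set N := max n₁ n₂ with hN
        obtain ⟨b, hb⟩ := Submodule.Quotient.mk_surjective
          (Ideal.span {f} ^ N • ⊤ : Submodule A A) (a.val N)
        rw [act_eq f tor a (kill_mono f h₂ (le_max_right _ _)) hb,
          act_eq f tor a (kill_mono f h₁ (le_max_left _ _)) hb, smul_comm] }
  map_add' a a' := by
    ext m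
    obtain ⟨n, hn⟩ := tor m
    obtain ⟨b, hb⟩ := Submodule.Quotient.mk_surjective
      (Ideal.span {f} ^ n • ⊤ : Submodule A A) (a.val n)
    obtain ⟨b', hb'⟩ := Submodule.Quotient.mk_surjective
      (Ideal.span {f} ^ n • ⊤ : Submodule A A) (a'.val n)
    have hsum : (Submodule.Quotient.mk (b + b') :
        A ⧸ (Ideal.span {f} ^ n • ⊤ : Submodule A A)) = (a + a').val n := by
      rw [Submodule.Quotient.mk_add, hb, hb', AdicCompletion.val_add_apply]
    simp only [LinearMap.coe_mk, AddHom.coe_mk, LinearMap.add_apply]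
    rw [act_eq f tor _ hn hsum, act_eq f tor a hn hb, act_eq f tor a' hn hb', add_smul]
  map_smul' r a := by
    ext m
    obtain ⟨n, hn⟩ := tor m
    obtain ⟨b, hb⟩ := Submodule.Quotient.mk_surjective
      (Ideal.span {f} ^ n • ⊤ : Submodule A A) (a.val n)
    have hrb : (Submodule.Quotient.mk (r * b) :
        A ⧸ (Ideal.span {f} ^ n • ⊤ : Submodule A A)) = (r • a).val n := by
      rw [show r * b = r • b from rfl, Submodule.Quotient.mk_smul, hb,
        AdicCompletion.val_smul_apply]
    simp only [LinearMap.coe_mk, AddHom.coe_mk, RingHom.id_apply, LinearMap.smul_apply]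
    rw [act_eq f tor _ hn hrb, act_eq f tor a hn hb, mul_smul]

end Aux

/-- If the localization `M_f` vanishes, then the natural map `M → Â ⊗ M` to the base
change along the `f`-adic completion is an isomorphism; consequently, if moreover
`Â ⊗ M = 0`, then `M = 0`. -/
theorem stmt_12 {A : Type} [CommRing A] (f : A)
    (M : Type) [AddCommGroup M] [Module A M]
    (h : Subsingleton ((Localization (Submonoid.powers f)) ⊗[A] M)) :
    Function.Bijective
      (TensorProduct.mk A (AdicCompletion (Ideal.span {f}) A) M 1) ∧
    (Subsingleton ((AdicCompletion (Ideal.span {f}) A) ⊗[A] M) → Subsingleton M) := by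
  have tor : ∀ m : M, ∃ n, f ^ n • m = 0 := by
    have e := (IsLocalizedModule.isBaseChange (Submonoid.powers f)
      (Localization (Submonoid.powers f))
      (LocalizedModule.mkLinearMap (Submonoid.powers f) M)).equiv
    have hsub : Subsingleton (LocalizedModule (Submonoid.powers f) M) :=
      e.symm.toEquiv.subsingleton
    rw [LocalizedModule.subsingleton_iff] at hsub
    intro m
    obtain ⟨r, hr, h0⟩ := hsub m
    obtain ⟨n, rfl⟩ := hr
    exact ⟨n, h0⟩
  set ψ := TensorProduct.lift (actHom f tor) with hψ
  have hinj : ∀ m : M,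
      ψ (TensorProduct.mk A (AdicCompletion (Ideal.span {f}) A) M 1 m) = m := by
    intro m
    obtain ⟨n, hn⟩ := tor m
    have h1 : (Submodule.Quotient.mk 1 : A ⧸ (Ideal.span {f} ^ n • ⊤ : Submodule A A)) =
        (1 : AdicCompletion (Ideal.span {f}) A).val n := by
      rw [AdicCompletion.val_one]
      rfl
    rw [TensorProduct.mk_apply, hψ, TensorProduct.lift.tmul]
    rw [show (actHom f tor) 1 m = act f tor 1 m from rfl, act_eq f tor 1 hn h1, one_smul]
  have hsurj : ∀ x : AdicCompletion (Ideal.span {f}) A ⊗[A] M,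
      TensorProduct.mk A (AdicCompletion (Ideal.span {f}) A) M 1 (ψ x) = x := by
    intro x
    induction x using TensorProduct.induction_on with
    | zero => simp
    | tmul a m =>
      obtain ⟨n, hn⟩ := tor m
      obtain ⟨b, hb⟩ := Submodule.Quotient.mk_surjective
        (Ideal.span {f} ^ n • ⊤ : Submodule A A) (a.val n)
      rw [hψ, TensorProduct.lift.tmul,
        show (actHom f tor) a m = act f tor a m from rfl, act_eq f tor a hn hb,
        TensorProduct.mk_apply, TensorProduct.tmul_smul, TensorProduct.smul_tmul']
      have hval : (b • (1 : AdicCompletion (Ideal.span {f}) A)).val n =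
          Submodule.Quotient.mk b := by
        rw [AdicCompletion.val_smul_apply, AdicCompletion.val_one]
        rw [show (1 : A ⧸ (Ideal.span {f} ^ n • ⊤ : Submodule A A)) =
          Submodule.Quotient.mk 1 from rfl, ← Submodule.Quotient.mk_smul]
        simp
      have hkey : (a - b • 1) ⊗ₜ[A] m = (0 : AdicCompletion (Ideal.span {f}) A ⊗[A] M) :=
        aux_key f _ n m hn (by rw [AdicCompletion.val_sub_apply, hval, ← hb, sub_self])
      rw [TensorProduct.sub_tmul, sub_eq_zero] at hkey
      exact hkey.symm
    | add x y hx hy => rw [map_add, hψ] at *; rw [map_add, hx, hy]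
  refine ⟨⟨fun m m' hmm => ?_, fun x => ⟨ψ x, hsurj x⟩⟩, fun hs => ?_⟩
  · have := congrArg ψ hmm
    rwa [hinj, hinj] at this
  · exact ⟨fun m m' => by
      have := congrArg ψ (Subsingleton.elim
        (TensorProduct.mk A (AdicCompletion (Ideal.span {f}) A) M 1 m)
        (TensorProduct.mk A (AdicCompletion (Ideal.span {f}) A) M 1 m'))
      rwa [hinj, hinj] at this⟩
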